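/- Suppose φ ∈ L^∞(𝕋) is unimodular. If there exists ψ ∈ 𝔄 with ‖φ − ψ‖_∞ < 1, then for every α ∈ 𝔹² the operator T^α_{conj(φ)} T^α_ψ is invertible, and hence T^α_φ is left invertible. If moreover ψ is invertible in 𝔄, then T^α_{conj(ψ)} T^α_φ is invertible and T^α_φ is invertible, for every α ∈ 𝔹². -/

import Mathlib

open MeasureTheory Complex AddCircle
open scoped ENNReal

noncomputable section

instance fact_two_pi_pos : Fact (0 < 2 * Real.pi) := ⟨by positivity⟩

/-- The unit circle `𝕋`, realized as `ℝ / 2πℤ`. -/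
abbrev CircleT : Type := AddCircle (2 * Real.pi)

/-- Normalized arc-length measure `dt/2π` on the circle. -/
abbrev hm : Measure CircleT := haarAddCircle

/-- The `n`-th Fourier coefficient of an `L²` function on the circle. -/
def hat2 (f : Lp ℂ 2 hm) (n : ℤ) : ℂ := fourierBasis.repr f n

lemma hat2_eq_inner (f : Lp ℂ 2 hm) (n : ℤ) :
    hat2 f n = @inner ℂ _ _ ((fourierBasis (T := 2 * Real.pi)) n) f :=
  fourierBasis.repr_apply_apply f n

lemma continuous_hat2 (n : ℤ) : Continuous fun f : Lp ℂ 2 hm => hat2 f n := by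
  simp only [hat2_eq_inner]
  exact continuous_const.inner continuous_id

@[simp] lemma hat2_add (f g : Lp ℂ 2 hm) (n : ℤ) :
    hat2 (f + g) n = hat2 f n + hat2 g n := by
  simp [hat2, map_add]

@[simp] lemma hat2_smul (c : ℂ) (f : Lp ℂ 2 hm) (n : ℤ) :
    hat2 (c • f) n = c * hat2 f n := by
  simp [hat2, _root_.map_smul]

@[simp] lemma hat2_zero (n : ℤ) : hat2 0 n = 0 := by simp [hat2]

/-- The Hardy space `H² ⊂ L²`: vanishing negative Fourier coefficients. -/
def Hardy2 : Submodule ℂ (Lp ℂ 2 hm) where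
  carrier := {f | ∀ n : ℤ, n < 0 → hat2 f n = 0}
  add_mem' := fun hf hg n hn => by simp [hf n hn, hg n hn]
  zero_mem' := fun n _ => hat2_zero n
  smul_mem' := fun c f hf n hn => by simp [hf n hn]

/-- The subspace `z²H² ⊂ H²`: Fourier coefficients vanish below index 2. -/
def Hardy20 : Submodule ℂ (Lp ℂ 2 hm) where
  carrier := {f | ∀ n : ℤ, n < 2 → hat2 f n = 0}
  add_mem' := fun hf hg n hn => by simp [hf n hn, hg n hn]
  zero_mem' := fun n _ => hat2_zero n
  smul_mem' := fun c f hf n hn => by simp [hf n hn]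

/-- The unit sphere `𝔹² = {(a,b) ∈ ℂ² : |a|² + |b|² = 1}`. -/
def B2 : Set (ℂ × ℂ) := {α | ‖α.1‖ ^ 2 + ‖α.2‖ ^ 2 = 1}

/-- The space `H²_α = {f ∈ H² : b·f(0) = a·f'(0)}` for `α = (a,b)`; here `f(0) = f̂(0)` and
`f'(0) = f̂(1)`. -/
def HardyA (α : ℂ × ℂ) : Submodule ℂ (Lp ℂ 2 hm) where
  carrier := {f | (∀ n : ℤ, n < 0 → hat2 f n = 0) ∧ α.2 * hat2 f 0 = α.1 * hat2 f 1}
  add_mem' := fun hf hg =>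
    ⟨fun n hn => by simp [hf.1 n hn, hg.1 n hn],
     by simp only [hat2_add, mul_add, hf.2, hg.2]⟩
  zero_mem' := ⟨fun n _ => hat2_zero n, by simp⟩
  smul_mem' := fun c f hf =>
    ⟨fun n hn => by simp [hf.1 n hn],
     by simp only [hat2_smul, mul_left_comm, hf.2]⟩

lemma isClosed_vanishing (s : Set ℤ) :
    IsClosed {f : Lp ℂ 2 hm | ∀ n ∈ s, hat2 f n = 0} := by
  have : {f : Lp ℂ 2 hm | ∀ n ∈ s, hat2 f n = 0}
      = ⋂ (n : ℤ) (_ : n ∈ s), {f | hat2 f n = 0} := by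
    ext f; simp
  rw [this]
  exact isClosed_iInter fun n => isClosed_iInter fun _ =>
    isClosed_eq (continuous_hat2 n) continuous_const

lemma isClosed_Hardy2 : IsClosed (Hardy2 : Set (Lp ℂ 2 hm)) := by
  have := isClosed_vanishing {n : ℤ | n < 0}
  simpa [Hardy2] using this

lemma isClosed_Hardy20 : IsClosed (Hardy20 : Set (Lp ℂ 2 hm)) := by
  have := isClosed_vanishing {n : ℤ | n < 2}
  simpa [Hardy20] using this

lemma isClosed_HardyA (α : ℂ × ℂ) : IsClosed (HardyA α : Set (Lp ℂ 2 hm)) := by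
  have h1 := isClosed_vanishing {n : ℤ | n < 0}
  have h2 : IsClosed {f : Lp ℂ 2 hm | α.2 * hat2 f 0 = α.1 * hat2 f 1} :=
    isClosed_eq (continuous_const.mul (continuous_hat2 0))
      (continuous_const.mul (continuous_hat2 1))
  have : (HardyA α : Set (Lp ℂ 2 hm))
      = {f : Lp ℂ 2 hm | ∀ n ∈ {n : ℤ | n < 0}, hat2 f n = 0}
        ∩ {f : Lp ℂ 2 hm | α.2 * hat2 f 0 = α.1 * hat2 f 1} := by
    ext f; simp [HardyA, Set.mem_setOf_eq]
  rw [this]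
  exact h1.inter h2

instance : CompleteSpace Hardy2 := isClosed_Hardy2.completeSpace_coe
instance : CompleteSpace Hardy20 := isClosed_Hardy20.completeSpace_coe
instance (α : ℂ × ℂ) : CompleteSpace (HardyA α) := (isClosed_HardyA α).completeSpace_coe

/-- Multiplication of an `L²` function by an `L^∞` function, as an element of `L²`. -/
def mulFun (φ : Lp ℂ ∞ hm) (f : Lp ℂ 2 hm) : Lp ℂ 2 hm :=
  ((Lp.memLp f).smul (r := 2) (Lp.memLp φ)).toLp (⇑φ • ⇑f)

lemma coeFn_mulFun (φ : Lp ℂ ∞ hm) (f : Lp ℂ 2 hm) :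
    mulFun φ f =ᵐ[hm] fun t => φ t * f t := by
  filter_upwards [MemLp.coeFn_toLp ((Lp.memLp f).smul (r := 2) (Lp.memLp φ))] with t ht
  simpa [mulFun, Pi.smul_apply', smul_eq_mul] using ht
lemma mulFun_add' (φ : Lp ℂ ∞ hm) (f g : Lp ℂ 2 hm) :
    mulFun φ (f + g) = mulFun φ f + mulFun φ g := by
  apply Lp.ext
  filter_upwards [coeFn_mulFun φ (f + g), coeFn_mulFun φ f, coeFn_mulFun φ g,
    Lp.coeFn_add f g, Lp.coeFn_add (mulFun φ f) (mulFun φ g)] with t h1 h2 h3 h4 h5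
  simp only [h5, Pi.add_apply, h1, h2, h3, h4]
  ring

lemma mulFun_smul' (φ : Lp ℂ ∞ hm) (c : ℂ) (f : Lp ℂ 2 hm) :
    mulFun φ (c • f) = c • mulFun φ f := by
  apply Lp.ext
  filter_upwards [coeFn_mulFun φ (c • f), coeFn_mulFun φ f,
    Lp.coeFn_smul c f, Lp.coeFn_smul c (mulFun φ f)] with t h1 h2 h3 h4
  simp only [h4, Pi.smul_apply, h1, h2, h3, smul_eq_mul]
  ring

lemma norm_mulFun_le (φ : Lp ℂ ∞ hm) (f : Lp ℂ 2 hm) : ‖mulFun φ f‖ ≤ ‖φ‖ * ‖f‖ := by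
  rw [mulFun, Lp.norm_toLp]
  have h := eLpNorm_smul_le_eLpNorm_top_mul_eLpNorm (μ := hm) 2 (Lp.aestronglyMeasurable f) ⇑φ
  calc (eLpNorm (⇑φ • ⇑f) 2 hm).toReal
      ≤ ((eLpNorm (⇑φ) ∞ hm) * eLpNorm (⇑f) 2 hm).toReal := by
        apply ENNReal.toReal_mono _ h
        exact ENNReal.mul_ne_top (Lp.eLpNorm_ne_top φ) (Lp.eLpNorm_ne_top f)
    _ = ‖φ‖ * ‖f‖ := by rw [ENNReal.toReal_mul, Lp.norm_def, Lp.norm_def]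

/-- Multiplication by an `L^∞` function, as a bounded operator on `L²`. -/
def mul2 (φ : Lp ℂ ∞ hm) : Lp ℂ 2 hm →L[ℂ] Lp ℂ 2 hm :=
  LinearMap.mkContinuous
    { toFun := mulFun φ
      map_add' := mulFun_add' φ
      map_smul' := mulFun_smul' φ }
    ‖φ‖ (norm_mulFun_le φ)

lemma coeFn_mul2 (φ : Lp ℂ ∞ hm) (f : Lp ℂ 2 hm) :
    mul2 φ f =ᵐ[hm] fun t => φ t * f t := coeFn_mulFun φ f

/-- The Toeplitz operator `T^α_φ = V_α^* M_φ V_α` on `H²_α`. -/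
def Toeplitz (α : ℂ × ℂ) (φ : Lp ℂ ∞ hm) : HardyA α →L[ℂ] HardyA α :=
  (HardyA α).orthogonalProjectionOnto ∘L (mul2 φ) ∘L (HardyA α).subtypeL

/-- The classical Toeplitz operator `T_φ = V^* M_φ V` on `H²`. -/
def ToeplitzH (φ : Lp ℂ ∞ hm) : Hardy2 →L[ℂ] Hardy2 :=
  Hardy2.orthogonalProjectionOnto ∘L (mul2 φ) ∘L Hardy2.subtypeL

/-- The compression `W^* M_φ W` of multiplication by `φ` to `z²H²`. -/
def Toeplitz20 (φ : Lp ℂ ∞ hm) : Hardy20 →L[ℂ] Hardy20 :=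
  Hardy20.orthogonalProjectionOnto ∘L (mul2 φ) ∘L Hardy20.subtypeL

/-- The `n`-th Fourier coefficient of an `L^∞` function on the circle. -/
def hatInf (φ : Lp ℂ ∞ hm) (n : ℤ) : ℂ := fourierCoeff (⇑φ) n

/-- The Neil algebra `𝔄`, viewed inside `L^∞` via boundary values: the (boundary values of)
bounded analytic functions on the disc whose derivative vanishes at `0`; equivalently, those
`φ ∈ L^∞` whose Fourier coefficients vanish at all negative indices and at index `1`. -/
def NeilSet : Set (Lp ℂ ∞ hm) := {φ | (∀ n : ℤ, n < 0 → hatInf φ n = 0) ∧ hatInf φ 1 = 0}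

/-- `𝔄₀ = z²H^∞`, the functions in the Neil algebra vanishing at `0`. -/
def NeilSet0 : Set (Lp ℂ ∞ hm) := {φ | ∀ n : ℤ, n < 2 → hatInf φ n = 0}

/-- `H^∞`, viewed inside `L^∞` via boundary values. -/
def HinfSet : Set (Lp ℂ ∞ hm) := {φ | ∀ n : ℤ, n < 0 → hatInf φ n = 0}

/-- `φ ∈ L^∞` is unimodular if `|φ| = 1` a.e. -/
def Unimodular (φ : Lp ℂ ∞ hm) : Prop := ∀ᵐ t ∂hm, ‖φ t‖ = 1

/-- The product of two `L^∞` functions. -/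
def mulInf (φ ψ : Lp ℂ ∞ hm) : Lp ℂ ∞ hm :=
  ((Lp.memLp ψ).smul (r := ∞) (Lp.memLp φ)).toLp (⇑φ • ⇑ψ)

lemma coeFn_mulInf (φ ψ : Lp ℂ ∞ hm) :
    mulInf φ ψ =ᵐ[hm] fun t => φ t * ψ t := by
  filter_upwards [MemLp.coeFn_toLp ((Lp.memLp ψ).smul (r := ∞) (Lp.memLp φ))] with t ht
  simpa [mulInf, Pi.smul_apply', smul_eq_mul] using ht

/-- The complex conjugate of an `L^∞` function. -/
def conjInf (φ : Lp ℂ ∞ hm) : Lp ℂ ∞ hm :=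
  (MemLp.of_le (Lp.memLp φ)
      (Complex.continuous_conj.comp_aestronglyMeasurable (Lp.aestronglyMeasurable φ))
      (Filter.Eventually.of_forall fun t => by simp)).toLp
    fun t => (starRingEnd ℂ) (φ t)

lemma coeFn_conjInf (φ : Lp ℂ ∞ hm) :
    conjInf φ =ᵐ[hm] fun t => (starRingEnd ℂ) (φ t) :=
  MemLp.coeFn_toLp _

/-- A bounded operator is left invertible if it has a bounded left inverse. -/
def LeftInvertible {E F : Type*} [NormedAddCommGroup E] [NormedAddCommGroup F]
    [NormedSpace ℂ E] [NormedSpace ℂ F] (T : E →L[ℂ] F) : Prop :=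
  ∃ S : F →L[ℂ] E, S ∘L T = ContinuousLinearMap.id ℂ E

/-- A bounded operator on a space is invertible if it has a bounded two-sided inverse. -/
def InvertibleOp {E : Type*} [NormedAddCommGroup E] [NormedSpace ℂ E] (T : E →L[ℂ] E) : Prop :=
  ∃ S : E →L[ℂ] E, S ∘L T = ContinuousLinearMap.id ℂ E ∧ T ∘L S = ContinuousLinearMap.id ℂ E

/-- The value at `w` in the unit disc of the analytic extension of (an `L²` function in) a Hardy
space, via its Taylor coefficients. -/
def eval2 (f : Lp ℂ 2 hm) (w : ℂ) : ℂ := ∑' n : ℕ, hat2 f n * w ^ n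

/-- The value at `w` in the unit disc of the analytic extension of (an `L^∞` function in) `H^∞`,
via its Taylor coefficients. -/
def evalInf (φ : Lp ℂ ∞ hm) (w : ℂ) : ℂ := ∑' n : ℕ, hatInf φ n * w ^ n

/-- `ψ` is invertible in the Neil algebra. -/
def NeilInvertible (ψ : Lp ℂ ∞ hm) : Prop :=
  ψ ∈ NeilSet ∧ ∃ χ ∈ NeilSet, mulInf ψ χ = Lp.const ∞ hm (1 : ℂ)

/-- The orthogonal projection of `L²` onto `H²_α`, as an operator on `L²`. -/
def projA (α : ℂ × ℂ) : Lp ℂ 2 hm →L[ℂ] Lp ℂ 2 hm :=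
  (HardyA α).subtypeL ∘L (HardyA α).orthogonalProjectionOnto

/-- The subspace `𝓜 ⊂ L¹` of functions whose Fourier coefficients vanish at `0` and at all
indices `≤ -2`. -/
def MM : Set (Lp ℂ 1 hm) :=
  {h | fourierCoeff (⇑h) 0 = 0 ∧ ∀ n : ℤ, n ≤ -2 → fourierCoeff (⇑h) n = 0}
/-- The complex conjugate of an `L²` function. -/
def conj2 (f : Lp ℂ 2 hm) : Lp ℂ 2 hm :=
  (MemLp.of_le (Lp.memLp f)
      (Complex.continuous_conj.comp_aestronglyMeasurable (Lp.aestronglyMeasurable f))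
      (Filter.Eventually.of_forall fun t => by simp)).toLp
    fun t => (starRingEnd ℂ) (f t)

lemma coeFn_conj2 (f : Lp ℂ 2 hm) :
    conj2 f =ᵐ[hm] fun t => (starRingEnd ℂ) (f t) :=
  MemLp.coeFn_toLp _

lemma fourierCoeff_hm_congr {f g : CircleT → ℂ} (h : f =ᵐ[hm] g) (n : ℤ) :
    fourierCoeff f n = fourierCoeff g n := by
  unfold fourierCoeff
  exact integral_congr_ae (by filter_upwards [h] with t ht; rw [ht])

lemma integrable_fourier_smul {f : CircleT → ℂ} (hf : Integrable f hm) (n : ℤ) :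
    Integrable (fun t => (fourier n t : ℂ) • f t) hm := by
  simp_rw [smul_eq_mul]
  exact hf.bdd_mul ((fourier n).continuous.aestronglyMeasurable)
    (c := 1) (Filter.Eventually.of_forall fun t => le_of_eq (Circle.norm_coe _))

lemma fourierCoeff_add_of_integrable {f g : CircleT → ℂ}
    (hf : Integrable f hm) (hg : Integrable g hm) (n : ℤ) :
    fourierCoeff (f + g) n = fourierCoeff f n + fourierCoeff g n := by
  unfold fourierCoeff
  rw [← integral_add (integrable_fourier_smul hf (-n)) (integrable_fourier_smul hg (-n))]
  exact integral_congr_ae (Filter.Eventually.of_forall fun t => by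
    simp only [Pi.add_apply, smul_eq_mul]; ring)

lemma fourierCoeff_smul (c : ℂ) (f : CircleT → ℂ) (n : ℤ) :
    fourierCoeff (c • f) n = c * fourierCoeff f n := by
  unfold fourierCoeff
  have : (∫ t : CircleT, (fourier (-n)) t • (c • f) t ∂hm)
      = ∫ t : CircleT, c • ((fourier (-n)) t • f t) ∂hm := by
    refine integral_congr_ae (Filter.Eventually.of_forall fun t => ?_)
    simp only [Pi.smul_apply, smul_eq_mul]; ring
  rw [this, integral_smul, smul_eq_mul]

/-- `𝓜`, as a subspace of `L¹`. -/
def MMsub : Submodule ℂ (Lp ℂ 1 hm) where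
  carrier := MM
  add_mem' := by
    intro f g hf hg
    have key : ∀ n : ℤ, fourierCoeff (⇑(f + g)) n = fourierCoeff ⇑f n + fourierCoeff ⇑g n := by
      intro n
      rw [fourierCoeff_hm_congr (Lp.coeFn_add f g) n]
      exact fourierCoeff_add_of_integrable (L1.integrable_coeFn f) (L1.integrable_coeFn g) n
    exact ⟨by rw [key 0, hf.1, hg.1, add_zero],
      fun n hn => by rw [key n, hf.2 n hn, hg.2 n hn, add_zero]⟩
  zero_mem' := by
    have key : ∀ n : ℤ, fourierCoeff (⇑(0 : Lp ℂ 1 hm)) n = 0 := by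
      intro n
      rw [fourierCoeff_hm_congr (Lp.coeFn_zero ℂ 1 hm) n]
      simp [fourierCoeff]
    exact ⟨key 0, fun n _ => key n⟩
  smul_mem' := by
    intro c f hf
    have key : ∀ n : ℤ, fourierCoeff (⇑(c • f)) n = c * fourierCoeff ⇑f n := by
      intro n
      rw [fourierCoeff_hm_congr (Lp.coeFn_smul c f) n, ← fourierCoeff_smul c ⇑f n]
    exact ⟨by rw [key 0, hf.1, mul_zero], fun n hn => by rw [key n, hf.2 n hn, mul_zero]⟩

lemma hatInf_add (φ ψ : Lp ℂ ∞ hm) (n : ℤ) :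
    hatInf (φ + ψ) n = hatInf φ n + hatInf ψ n := by
  unfold hatInf
  rw [fourierCoeff_hm_congr (Lp.coeFn_add φ ψ) n]
  exact fourierCoeff_add_of_integrable ((Lp.memLp φ).integrable le_top)
    ((Lp.memLp ψ).integrable le_top) n

lemma hatInf_smul (c : ℂ) (φ : Lp ℂ ∞ hm) (n : ℤ) :
    hatInf (c • φ) n = c * hatInf φ n := by
  unfold hatInf
  rw [fourierCoeff_hm_congr (Lp.coeFn_smul c φ) n, ← fourierCoeff_smul c ⇑φ n]

lemma hatInf_zero (n : ℤ) : hatInf (0 : Lp ℂ ∞ hm) n = 0 := by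
  unfold hatInf
  rw [fourierCoeff_hm_congr (Lp.coeFn_zero ℂ ∞ hm) n]
  simp [fourierCoeff]

/-- The Neil algebra `𝔄`, as a subspace of `L^∞`. -/
def NeilSub : Submodule ℂ (Lp ℂ ∞ hm) where
  carrier := NeilSet
  add_mem' := fun hf hg =>
    ⟨fun n hn => by rw [hatInf_add, hf.1 n hn, hg.1 n hn, add_zero],
      by rw [hatInf_add, hf.2, hg.2, add_zero]⟩
  zero_mem' := ⟨fun n _ => hatInf_zero n, hatInf_zero 1⟩
  smul_mem' := fun c φ hφ =>
    ⟨fun n hn => by rw [hatInf_smul, hφ.1 n hn, mul_zero],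
      by rw [hatInf_smul, hφ.2, mul_zero]⟩
lemma hat2_eq_fourierCoeff (f : Lp ℂ 2 hm) (n : ℤ) :
    hat2 f n = fourierCoeff (⇑f) n := fourierBasis_repr f n

lemma ae_norm_le_norm_inf (f : Lp ℂ ∞ hm) : ∀ᵐ t ∂hm, ‖f t‖ ≤ ‖f‖ := by
  have h := ae_le_eLpNormEssSup (f := ⇑f) (μ := hm)
  filter_upwards [h] with t ht
  have : (‖f t‖₊ : ℝ≥0∞) ≤ eLpNorm (⇑f) ∞ hm := by
    rwa [eLpNorm_exponent_top]
  calc ‖f t‖ = ((‖f t‖₊ : ℝ≥0∞)).toReal := by simp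
    _ ≤ (eLpNorm (⇑f) ∞ hm).toReal := ENNReal.toReal_mono (Lp.eLpNorm_ne_top f) this
    _ = ‖f‖ := (Lp.norm_def f).symm

lemma norm_inf_le_of_ae_bound {f : Lp ℂ ∞ hm} {C : ℝ} (hC : 0 ≤ C)
    (h : ∀ᵐ t ∂hm, ‖f t‖ ≤ C) : ‖f‖ ≤ C := by
  have := Lp.norm_le_of_ae_bound (f := f) hC h
  simpa using this

lemma inner_L2 (f g : Lp ℂ 2 hm) :
    @inner ℂ _ _ f g = ∫ t, (starRingEnd ℂ) (f t) * g t ∂hm := by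
  rw [MeasureTheory.L2.inner_def]
  exact integral_congr_ae (Filter.Eventually.of_forall fun t => by
    simp [RCLike.inner_apply, mul_comm])

lemma inner_mul2_left (χ : Lp ℂ ∞ hm) (x y : Lp ℂ 2 hm) :
    @inner ℂ _ _ (mul2 (conjInf χ) x) y = @inner ℂ _ _ x (mul2 χ y) := by
  rw [inner_L2, inner_L2]
  apply integral_congr_ae
  filter_upwards [coeFn_mul2 (conjInf χ) x, coeFn_mul2 χ y, coeFn_conjInf χ] with t h1 h2 h3
  rw [h1, h2, h3]
  simp only [map_mul, RingHomCompTriple.comp_apply, RingHom.id_apply]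
  ring_nf

lemma hat2_conj_mul_fourier (χ : Lp ℂ ∞ hm) (n k : ℤ) :
    hat2 (mul2 (conjInf χ) (fourierLp 2 n)) k = (starRingEnd ℂ) (hatInf χ (n - k)) := by
  rw [hat2_eq_fourierCoeff]
  have hae : ⇑(mul2 (conjInf χ) (fourierLp 2 n))
      =ᵐ[hm] fun t => (starRingEnd ℂ) (χ t) * fourier n t := by
    filter_upwards [coeFn_mul2 (conjInf χ) (fourierLp 2 n), coeFn_conjInf χ,
      coeFn_fourierLp (T := 2 * Real.pi) 2 n] with t h1 h2 h3
    rw [h1, h2, h3]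
  rw [fourierCoeff_hm_congr hae]
  unfold hatInf fourierCoeff
  rw [← integral_conj]
  refine integral_congr_ae (Filter.Eventually.of_forall fun t => ?_)
  simp only [smul_eq_mul, map_mul]
  have h4 : (starRingEnd ℂ) ((fourier (-(n - k))) t) = fourier (n - k) t := by
    rw [fourier_neg]
    exact (Complex.conj_conj _)
  rw [h4]
  have h5 : (fourier (n - k)) t = fourier n t * fourier (-k) t := by
    rw [show n - k = n + -k by ring, fourier_add]
  rw [h5]
  ring

lemma hat2_mul2 (χ : Lp ℂ ∞ hm) (f : Lp ℂ 2 hm) (n : ℤ) :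
    hat2 (mul2 χ f) n = ∑' k : ℤ, hatInf χ (n - k) * hat2 f k := by
  have hb : (fourierBasis (T := 2 * Real.pi)) n = fourierLp 2 n := by
    rw [← coe_fourierBasis]
  rw [hat2_eq_inner, hb, ← inner_mul2_left χ (fourierLp 2 n) f]
  rw [← HilbertBasis.tsum_inner_mul_inner fourierBasis (mul2 (conjInf χ) (fourierLp 2 n)) f]
  congr 1
  funext k
  congr 1
  · have h := hat2_conj_mul_fourier χ n k
    rw [hat2_eq_inner] at h
    rw [← inner_conj_symm (𝕜 := ℂ), h]
    exact Complex.conj_conj _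
  · exact (hat2_eq_inner f k).symm

lemma mul2_mem_HardyA {χ : Lp ℂ ∞ hm} (hχ : χ ∈ NeilSet) (α : ℂ × ℂ)
    {f : Lp ℂ 2 hm} (hf : f ∈ HardyA α) : mul2 χ f ∈ HardyA α := by
  obtain ⟨hχa, hχ1⟩ := hχ
  obtain ⟨hfa, hfb⟩ := hf
  have h0 : hat2 (mul2 χ f) 0 = hatInf χ 0 * hat2 f 0 := by
    rw [hat2_mul2]
    rw [tsum_eq_single 0 ?_]
    · norm_num
    · intro k hk
      rcases lt_trichotomy k 0 with h | h | h
      · rw [hfa k h, mul_zero]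
      · exact absurd h hk
      · rw [hχa (0 - k) (by omega), zero_mul]
  have h1 : hat2 (mul2 χ f) 1 = hatInf χ 0 * hat2 f 1 := by
    rw [hat2_mul2]
    rw [tsum_eq_single 1 ?_]
    · norm_num
    · intro k hk
      rcases lt_trichotomy k 0 with h | h | h
      · rw [hfa k h, mul_zero]
      · subst h
        rw [show (1 : ℤ) - 0 = 1 by ring, hχ1, zero_mul]
      · rw [hχa (1 - k) (by omega), zero_mul]
  refine ⟨?_, ?_⟩
  · intro n hn
    rw [hat2_mul2]
    have : (fun k : ℤ => hatInf χ (n - k) * hat2 f k) = fun _ => 0 := by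
      funext k
      rcases lt_or_ge k 0 with h | h
      · rw [hfa k h, mul_zero]
      · rw [hχa (n - k) (by omega), zero_mul]
    rw [this, tsum_zero]
  · rw [h0, h1, mul_left_comm, hfb, mul_left_comm]

lemma mul2_mul2 (a b : Lp ℂ ∞ hm) (x : Lp ℂ 2 hm) :
    mul2 a (mul2 b x) = mul2 (mulInf a b) x := by
  apply Lp.ext
  filter_upwards [coeFn_mul2 a (mul2 b x), coeFn_mul2 b x, coeFn_mul2 (mulInf a b) x,
    coeFn_mulInf a b] with t h1 h2 h3 h4
  rw [h1, h2, h3, h4]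
  ring

lemma mul2_one (x : Lp ℂ 2 hm) : mul2 (Lp.const ∞ hm (1 : ℂ)) x = x := by
  apply Lp.ext
  filter_upwards [coeFn_mul2 (Lp.const ∞ hm (1 : ℂ)) x, Lp.coeFn_const ∞ hm (1 : ℂ)] with t h1 h2
  rw [h1, h2]
  simp

lemma mul2_sub_symbol (a b : Lp ℂ ∞ hm) (x : Lp ℂ 2 hm) :
    mul2 (a - b) x = mul2 a x - mul2 b x := by
  apply Lp.ext
  filter_upwards [coeFn_mul2 (a - b) x, coeFn_mul2 a x, coeFn_mul2 b x, Lp.coeFn_sub a b,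
    Lp.coeFn_sub (mul2 a x) (mul2 b x)] with t h1 h2 h3 h4 h5
  rw [h5]
  simp only [Pi.sub_apply, h1, h2, h3, h4]
  ring

lemma Toeplitz_apply (α : ℂ × ℂ) (χ : Lp ℂ ∞ hm) (f : HardyA α) :
    Toeplitz α χ f = (HardyA α).orthogonalProjectionOnto (mul2 χ (f : Lp ℂ 2 hm)) := rfl

lemma toeplitz_one (α : ℂ × ℂ) :
    Toeplitz α (Lp.const ∞ hm (1 : ℂ)) = ContinuousLinearMap.id ℂ (HardyA α) := by
  refine ContinuousLinearMap.ext fun f => ?_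
  rw [Toeplitz_apply, mul2_one, ContinuousLinearMap.id_apply]
  exact Submodule.orthogonalProjectionOnto_mem_subspace_eq_self f

lemma toeplitz_sub (α : ℂ × ℂ) (a b : Lp ℂ ∞ hm) :
    Toeplitz α (a - b) = Toeplitz α a - Toeplitz α b := by
  refine ContinuousLinearMap.ext fun f => ?_
  simp only [ContinuousLinearMap.sub_apply, Toeplitz_apply, mul2_sub_symbol, map_sub]

lemma norm_toeplitz_le (α : ℂ × ℂ) (χ : Lp ℂ ∞ hm) : ‖Toeplitz α χ‖ ≤ ‖χ‖ := by
  have h1 : ‖mul2 χ‖ ≤ ‖χ‖ :=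
    LinearMap.mkContinuous_norm_le _ (norm_nonneg χ) _
  have h2 : ‖(mul2 χ) ∘L (HardyA α).subtypeL‖ ≤ ‖mul2 χ‖ * ‖(HardyA α).subtypeL‖ :=
    ContinuousLinearMap.opNorm_comp_le _ _
  have h3 : ‖Toeplitz α χ‖
      ≤ ‖(HardyA α).orthogonalProjectionOnto‖ * ‖(mul2 χ) ∘L (HardyA α).subtypeL‖ :=
    ContinuousLinearMap.opNorm_comp_le _ _
  have hP : ‖(HardyA α).orthogonalProjectionOnto‖ ≤ 1 := Submodule.orthogonalProjectionOnto_norm_le (HardyA α)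
  have hS : ‖(HardyA α).subtypeL‖ ≤ 1 := Submodule.norm_subtypeL_le (HardyA α)
  have hCn : (0:ℝ) ≤ ‖(mul2 χ) ∘L (HardyA α).subtypeL‖ := norm_nonneg ((mul2 χ) ∘L (HardyA α).subtypeL)
  have hSn : (0:ℝ) ≤ ‖(HardyA α).subtypeL‖ := norm_nonneg ((HardyA α).subtypeL)
  calc ‖Toeplitz α χ‖
      ≤ ‖(HardyA α).orthogonalProjectionOnto‖ * ‖(mul2 χ) ∘L (HardyA α).subtypeL‖ := h3
    _ ≤ 1 * ‖(mul2 χ) ∘L (HardyA α).subtypeL‖ := mul_le_mul_of_nonneg_right hP hCn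
    _ = ‖(mul2 χ) ∘L (HardyA α).subtypeL‖ := one_mul _
    _ ≤ ‖mul2 χ‖ * ‖(HardyA α).subtypeL‖ := h2
    _ ≤ ‖χ‖ * 1 := mul_le_mul h1 hS hSn (norm_nonneg χ)
    _ = ‖χ‖ := mul_one _

lemma toeplitz_comp_analytic (α : ℂ × ℂ) {χ : Lp ℂ ∞ hm} (hχ : χ ∈ NeilSet)
    (a : Lp ℂ ∞ hm) :
    Toeplitz α a ∘L Toeplitz α χ = Toeplitz α (mulInf a χ) := by
  ext f
  rw [ContinuousLinearMap.comp_apply, Toeplitz_apply, Toeplitz_apply, Toeplitz_apply]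
  have hmem : mul2 χ (f : Lp ℂ 2 hm) ∈ HardyA α := mul2_mem_HardyA hχ α f.2
  rw [show ((HardyA α).orthogonalProjectionOnto (mul2 χ (f : Lp ℂ 2 hm)) : Lp ℂ 2 hm) = mul2 χ (f : Lp ℂ 2 hm) from
    Submodule.starProjection_eq_self_iff.mpr hmem, mul2_mul2]

lemma toeplitz_conj_comp (α : ℂ × ℂ) {χ : Lp ℂ ∞ hm} (hχ : χ ∈ NeilSet)
    (b : Lp ℂ ∞ hm) :
    Toeplitz α (conjInf χ) ∘L Toeplitz α b = Toeplitz α (mulInf (conjInf χ) b) := by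
  ext f
  rw [ContinuousLinearMap.comp_apply, Toeplitz_apply, Toeplitz_apply, Toeplitz_apply,
    ← mul2_mul2]
  set g := mul2 b (f : Lp ℂ 2 hm) with hg
  set P := (HardyA α).orthogonalProjectionOnto with hP
  have hw : g - (P g : Lp ℂ 2 hm) ∈ (HardyA α)ᗮ :=
    Submodule.sub_starProjection_mem_orthogonal g
  have hperp : mul2 (conjInf χ) (g - (P g : Lp ℂ 2 hm)) ∈ (HardyA α)ᗮ := by
    rw [Submodule.mem_orthogonal']
    intro u hu
    rw [inner_mul2_left]
    exact (Submodule.mem_orthogonal' _ _).mp hw _ (mul2_mem_HardyA hχ α hu)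
  have hsplit : mul2 (conjInf χ) g
      = mul2 (conjInf χ) (P g : Lp ℂ 2 hm) + mul2 (conjInf χ) (g - (P g : Lp ℂ 2 hm)) := by
    rw [← map_add]
    congr 1
    abel
  rw [hsplit, map_add,
    Submodule.orthogonalProjectionOnto_apply_of_mem_orthogonal hperp, add_zero]

lemma invertibleOp_of_norm_lt_one (α : ℂ × ℂ) (A : HardyA α →L[ℂ] HardyA α) (h : ‖A‖ < 1) :
    InvertibleOp (ContinuousLinearMap.id ℂ (HardyA α) - A) := by
  let u := Units.oneSub (R := HardyA α →L[ℂ] HardyA α) A h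
  have hval : (u : (HardyA α →L[ℂ] HardyA α)) = ContinuousLinearMap.id ℂ (HardyA α) - A := by
    show (1 : HardyA α →L[ℂ] HardyA α) - A = _
    rw [ContinuousLinearMap.one_def]
  refine ⟨↑u⁻¹, ?_, ?_⟩
  · rw [← hval, ← ContinuousLinearMap.mul_def, u.inv_mul, ContinuousLinearMap.one_def]
  · rw [← hval, ← ContinuousLinearMap.mul_def, u.mul_inv, ContinuousLinearMap.one_def]

lemma invertibleOp_comp {E : Type*} [NormedAddCommGroup E] [NormedSpace ℂ E]
    {A B : E →L[ℂ] E} (hA : InvertibleOp A) (hB : InvertibleOp B) :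
    InvertibleOp (A ∘L B) := by
  obtain ⟨SA, hA1, hA2⟩ := hA
  obtain ⟨SB, hB1, hB2⟩ := hB
  refine ⟨SB ∘L SA, ?_, ?_⟩
  · refine ContinuousLinearMap.ext fun x => ?_
    have e1 := ContinuousLinearMap.ext_iff.mp hA1 (B x)
    have e2 := ContinuousLinearMap.ext_iff.mp hB1 x
    simp only [ContinuousLinearMap.comp_apply, ContinuousLinearMap.id_apply] at e1 e2 ⊢
    rw [e1, e2]
  · refine ContinuousLinearMap.ext fun x => ?_
    have e1 := ContinuousLinearMap.ext_iff.mp hB2 (SA x)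
    have e2 := ContinuousLinearMap.ext_iff.mp hA2 x
    simp only [ContinuousLinearMap.comp_apply, ContinuousLinearMap.id_apply] at e1 e2 ⊢
    rw [e1, e2]

lemma invertibleOp_congr {E : Type*} [NormedAddCommGroup E] [NormedSpace ℂ E]
    {A B : E →L[ℂ] E} (h : A = B) (hA : InvertibleOp A) : InvertibleOp B := h ▸ hA

lemma conj_mul_self_eq_one {z : ℂ} (hz : ‖z‖ = 1) : (starRingEnd ℂ) z * z = 1 := by
  have h := Complex.conj_mul' z
  rw [h, hz]
  norm_num

lemma norm_one_sub_conjPhi_mul (φ ψ : Lp ℂ ∞ hm) (hφ : Unimodular φ) :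
    ‖Lp.const ∞ hm (1 : ℂ) - mulInf (conjInf φ) ψ‖ ≤ ‖φ - ψ‖ := by
  apply norm_inf_le_of_ae_bound (norm_nonneg _)
  filter_upwards [Lp.coeFn_sub (Lp.const ∞ hm (1 : ℂ)) (mulInf (conjInf φ) ψ),
    coeFn_mulInf (conjInf φ) ψ, coeFn_conjInf φ, Lp.coeFn_const ∞ hm (1 : ℂ), hφ,
    ae_norm_le_norm_inf (φ - ψ), Lp.coeFn_sub φ ψ] with t h1 h2 h3 h4 h5 h6 h7
  rw [h1]
  simp only [Pi.sub_apply, h2, h3, h4, Function.const_apply]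
  have key : (1 : ℂ) - (starRingEnd ℂ) (φ t) * ψ t
      = (starRingEnd ℂ) (φ t) * (φ t - ψ t) := by
    rw [mul_sub, conj_mul_self_eq_one h5]
  rw [key, norm_mul, RCLike.norm_conj, h5, one_mul]
  rw [h7] at h6
  simpa using h6

lemma norm_one_sub_conjPsi_mul (φ ψ : Lp ℂ ∞ hm) (hφ : Unimodular φ) :
    ‖Lp.const ∞ hm (1 : ℂ) - mulInf (conjInf ψ) φ‖ ≤ ‖φ - ψ‖ := by
  apply norm_inf_le_of_ae_bound (norm_nonneg _)
  filter_upwards [Lp.coeFn_sub (Lp.const ∞ hm (1 : ℂ)) (mulInf (conjInf ψ) φ),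
    coeFn_mulInf (conjInf ψ) φ, coeFn_conjInf ψ, Lp.coeFn_const ∞ hm (1 : ℂ), hφ,
    ae_norm_le_norm_inf (φ - ψ), Lp.coeFn_sub φ ψ] with t h1 h2 h3 h4 h5 h6 h7
  rw [h1]
  simp only [Pi.sub_apply, h2, h3, h4, Function.const_apply]
  have key : (1 : ℂ) - (starRingEnd ℂ) (ψ t) * φ t
      = ((starRingEnd ℂ) (φ t) - (starRingEnd ℂ) (ψ t)) * φ t := by
    rw [sub_mul, conj_mul_self_eq_one h5]
  rw [key, norm_mul, h5, mul_one, ← map_sub, RCLike.norm_conj]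
  rw [h7] at h6
  simpa using h6

lemma mulInf_conj_conj (a b : Lp ℂ ∞ hm) :
    mulInf (conjInf a) (conjInf b) = conjInf (mulInf a b) := by
  apply Lp.ext
  filter_upwards [coeFn_mulInf (conjInf a) (conjInf b), coeFn_conjInf a, coeFn_conjInf b,
    coeFn_conjInf (mulInf a b), coeFn_mulInf a b] with t h1 h2 h3 h4 h5
  rw [h1, h2, h3, h4, h5, map_mul]

lemma conjInf_const_one : conjInf (Lp.const ∞ hm (1 : ℂ)) = Lp.const ∞ hm (1 : ℂ) := by
  apply Lp.ext
  filter_upwards [coeFn_conjInf (Lp.const ∞ hm (1 : ℂ)), Lp.coeFn_const ∞ hm (1 : ℂ)] with t h1 h2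
  rw [h1, h2]
  simp

lemma mulInf_comm (a b : Lp ℂ ∞ hm) : mulInf a b = mulInf b a := by
  apply Lp.ext
  filter_upwards [coeFn_mulInf a b, coeFn_mulInf b a] with t h1 h2
  rw [h1, h2, mul_comm]

lemma invA (φ ψ : Lp ℂ ∞ hm) (hφ : Unimodular φ) (hψ : ψ ∈ NeilSet) (hdist : ‖φ - ψ‖ < 1)
    (α : ℂ × ℂ) : InvertibleOp (Toeplitz α (conjInf φ) ∘L Toeplitz α ψ) := by
  have heq : Toeplitz α (conjInf φ) ∘L Toeplitz α ψ
      = ContinuousLinearMap.id ℂ (HardyA α)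
        - Toeplitz α (Lp.const ∞ hm (1 : ℂ) - mulInf (conjInf φ) ψ) := by
    rw [toeplitz_comp_analytic α hψ (conjInf φ)]
    conv_lhs => rw [show mulInf (conjInf φ) ψ
      = Lp.const ∞ hm (1 : ℂ) - (Lp.const ∞ hm (1 : ℂ) - mulInf (conjInf φ) ψ) from
        (sub_sub_cancel _ _).symm]
    rw [toeplitz_sub, toeplitz_one]
  have hnorm : ‖Toeplitz α (Lp.const ∞ hm (1 : ℂ) - mulInf (conjInf φ) ψ)‖ < 1 :=
    lt_of_le_of_lt ((norm_toeplitz_le _ _).trans (norm_one_sub_conjPhi_mul φ ψ hφ)) hdist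
  exact invertibleOp_congr heq.symm (invertibleOp_of_norm_lt_one α _ hnorm)

lemma invB (φ ψ : Lp ℂ ∞ hm) (hφ : Unimodular φ) (hψ : ψ ∈ NeilSet) (hdist : ‖φ - ψ‖ < 1)
    (α : ℂ × ℂ) : InvertibleOp (Toeplitz α (conjInf ψ) ∘L Toeplitz α φ) := by
  have heq : Toeplitz α (conjInf ψ) ∘L Toeplitz α φ
      = ContinuousLinearMap.id ℂ (HardyA α)
        - Toeplitz α (Lp.const ∞ hm (1 : ℂ) - mulInf (conjInf ψ) φ) := by
    rw [toeplitz_conj_comp α hψ φ]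
    conv_lhs => rw [show mulInf (conjInf ψ) φ
      = Lp.const ∞ hm (1 : ℂ) - (Lp.const ∞ hm (1 : ℂ) - mulInf (conjInf ψ) φ) from
        (sub_sub_cancel _ _).symm]
    rw [toeplitz_sub, toeplitz_one]
  have hnorm : ‖Toeplitz α (Lp.const ∞ hm (1 : ℂ) - mulInf (conjInf ψ) φ)‖ < 1 :=
    lt_of_le_of_lt ((norm_toeplitz_le _ _).trans (norm_one_sub_conjPsi_mul φ ψ hφ)) hdist
  exact invertibleOp_congr heq.symm (invertibleOp_of_norm_lt_one α _ hnorm)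

/-- If `φ` is unimodular and `‖φ - ψ‖_∞ < 1` for some `ψ ∈ 𝔄`, then `T^α_{conj φ} T^α_ψ`
is invertible and `T^α_φ` is left invertible, for every `α ∈ 𝔹²`; if moreover `ψ` is
invertible in `𝔄`, then `T^α_{conj ψ} T^α_φ` and `T^α_φ` are invertible. -/
theorem left_invertible_of_dist_lt_one (φ ψ : Lp ℂ ∞ hm) (hφ : Unimodular φ)
    (hψ : ψ ∈ NeilSet) (hdist : ‖φ - ψ‖ < 1) :
    (∀ α ∈ B2,
      InvertibleOp ((Toeplitz α (conjInf φ)) ∘L (Toeplitz α ψ)) ∧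
      LeftInvertible (Toeplitz α φ)) ∧
    (NeilInvertible ψ → ∀ α ∈ B2,
      InvertibleOp ((Toeplitz α (conjInf ψ)) ∘L (Toeplitz α φ)) ∧
      InvertibleOp (Toeplitz α φ)) := by
  constructor
  · intro α _
    refine ⟨invA φ ψ hφ hψ hdist α, ?_⟩
    obtain ⟨S, hS1, _⟩ := invB φ ψ hφ hψ hdist α
    exact ⟨S ∘L Toeplitz α (conjInf ψ), by rw [ContinuousLinearMap.comp_assoc, hS1]⟩
  · rintro ⟨hψN, χ, hχN, hχmul⟩ α _
    refine ⟨invB φ ψ hφ hψ hdist α, ?_⟩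
    have hone : mulInf (conjInf χ) (conjInf ψ) = Lp.const ∞ hm (1 : ℂ) := by
      rw [mulInf_conj_conj, mulInf_comm χ ψ, hχmul, conjInf_const_one]
    have hone2 : mulInf (conjInf ψ) (conjInf χ) = Lp.const ∞ hm (1 : ℂ) := by
      rw [mulInf_conj_conj, hχmul, conjInf_const_one]
    have hBC : Toeplitz α (conjInf χ) ∘L Toeplitz α (conjInf ψ)
        = ContinuousLinearMap.id ℂ (HardyA α) := by
      rw [toeplitz_conj_comp α hχN (conjInf ψ), hone, toeplitz_one]
    have hCB : Toeplitz α (conjInf ψ) ∘L Toeplitz α (conjInf χ)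
        = ContinuousLinearMap.id ℂ (HardyA α) := by
      rw [toeplitz_conj_comp α hψ (conjInf χ), hone2, toeplitz_one]
    have hTχ : InvertibleOp (Toeplitz α (conjInf χ)) :=
      ⟨Toeplitz α (conjInf ψ), hCB, hBC⟩
    have hTφ : Toeplitz α φ
        = Toeplitz α (conjInf χ) ∘L (Toeplitz α (conjInf ψ) ∘L Toeplitz α φ) := by
      rw [← ContinuousLinearMap.comp_assoc, hBC, ContinuousLinearMap.id_comp]
    exact invertibleOp_congr hTφ.symm (invertibleOp_comp hTχ (invB φ ψ hφ hψ hdist α))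

end
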